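/- Let N ≥ 1 be an integer, put β₀ = γ₀ = √(2N), and let q, p, u, w : (0,∞) → ℝ be differentiable functions satisfying for all s > 0: q′ = −s q + (β₀ − 2u) p + 2q²p/s, p′ = s p − (γ₀ + 2w) q − 2q p²/s, u′ = −2q², w′ = −2p², together with the first-integral relation β₀γ₀ − 4pq = (β₀ − 2u)(γ₀ + 2w). Define R(s) = q²(γ₀ + 2w) + p²(β₀ − 2u) − 2 s q p + 2 q² p²/s and h(s) = s + 2 q p/s. Then for all s > 0: (i) h² = s² − 2R′, and (ii) (s R″ + 2R′ − 2s(s − h))² = 4 h² [ (R + s R′)² − 4 s² (s − h) R − 2 N s² (s − h)² ]. -/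
import Mathlib

/-- Purely algebraic core of conclusion (ii): given the first-integral relation
`B * G = n - 4 * P * Q` (with `n = 2N`) and `s ≠ 0`, the squared second-order
equation holds with the explicit formulas for `R`, `R'`, `R''`, `h`. -/
private lemma gue_alg (s Q P B G n : ℝ) (hs : s ≠ 0)
    (h : B * G = n - 4 * P * Q) :
    (s * (-2 * (B * P ^ 2 - G * Q ^ 2)
          - 4 * (Q * P) * (B * P ^ 2 - G * Q ^ 2) / s ^ 2
          + 4 * (Q * P) ^ 2 / s ^ 3)
        + 2 * (-2 * Q * P - 2 * Q ^ 2 * P ^ 2 / s ^ 2)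
        - 2 * s * (s - (s + 2 * Q * P / s))) ^ 2 =
      4 * (s + 2 * Q * P / s) ^ 2 *
        (((Q ^ 2 * G + P ^ 2 * B - 2 * s * Q * P + 2 * Q ^ 2 * P ^ 2 / s)
            + s * (-2 * Q * P - 2 * Q ^ 2 * P ^ 2 / s ^ 2)) ^ 2
          - 4 * s ^ 2 * (s - (s + 2 * Q * P / s)) *
              (Q ^ 2 * G + P ^ 2 * B - 2 * s * Q * P + 2 * Q ^ 2 * P ^ 2 / s)
          - n * s ^ 2 * (s - (s + 2 * Q * P / s)) ^ 2) := by
  have key : (B * P ^ 2 - G * Q ^ 2) ^ 2 =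
      (Q ^ 2 * G + P ^ 2 * B - 4 * s * Q * P) ^ 2
        + 8 * s * Q * P * (Q ^ 2 * G + P ^ 2 * B)
        - 16 * s ^ 2 * (Q * P) ^ 2 + 16 * (Q * P) ^ 3
        - 4 * n * (Q * P) ^ 2 := by
    linear_combination (-4 * (Q * P) ^ 2) * h
  calc
    (s * (-2 * (B * P ^ 2 - G * Q ^ 2)
          - 4 * (Q * P) * (B * P ^ 2 - G * Q ^ 2) / s ^ 2
          + 4 * (Q * P) ^ 2 / s ^ 3)
        + 2 * (-2 * Q * P - 2 * Q ^ 2 * P ^ 2 / s ^ 2)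
        - 2 * s * (s - (s + 2 * Q * P / s))) ^ 2
      = 4 * ((B * P ^ 2 - G * Q ^ 2) ^ 2) * (s + 2 * Q * P / s) ^ 2 := by
        field_simp
        ring
    _ = 4 * ((Q ^ 2 * G + P ^ 2 * B - 4 * s * Q * P) ^ 2
          + 8 * s * Q * P * (Q ^ 2 * G + P ^ 2 * B)
          - 16 * s ^ 2 * (Q * P) ^ 2 + 16 * (Q * P) ^ 3
          - 4 * n * (Q * P) ^ 2) * (s + 2 * Q * P / s) ^ 2 := by
        rw [key]
    _ = 4 * (s + 2 * Q * P / s) ^ 2 *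
        (((Q ^ 2 * G + P ^ 2 * B - 2 * s * Q * P + 2 * Q ^ 2 * P ^ 2 / s)
            + s * (-2 * Q * P - 2 * Q ^ 2 * P ^ 2 / s ^ 2)) ^ 2
          - 4 * s ^ 2 * (s - (s + 2 * Q * P / s)) *
              (Q ^ 2 * G + P ^ 2 * B - 2 * s * Q * P + 2 * Q ^ 2 * P ^ 2 / s)
          - n * s ^ 2 * (s - (s + 2 * Q * P / s)) ^ 2) := by
        field_simp
        ring

/-- Proposition 3 of the paper (finite-`N` GUE coupled system with
`β₀ = γ₀ = √(2N)`) together with the first integral (3.10) implies that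
`R(s) = q²(γ₀+2w) + p²(β₀−2u) − 2sqp + 2q²p²/s` and `h(s) = s + 2qp/s` satisfy
(i) `h² = s² − 2R′` (equation (3.19)) and
(ii) the squared form of the second-order equation (3.16). -/
theorem gue_R_from_coupled_system (N : ℕ) (hN : 1 ≤ N)
    (β₀ γ₀ : ℝ) (hβ₀ : β₀ = Real.sqrt (2 * N)) (hγ₀ : γ₀ = Real.sqrt (2 * N))
    (q p u w : ℝ → ℝ)
    (hq : ∀ s > (0:ℝ), DifferentiableAt ℝ q s)
    (hp : ∀ s > (0:ℝ), DifferentiableAt ℝ p s)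
    (hu : ∀ s > (0:ℝ), DifferentiableAt ℝ u s)
    (hw : ∀ s > (0:ℝ), DifferentiableAt ℝ w s)
    (hq' : ∀ s > (0:ℝ), deriv q s =
      -s * q s + (β₀ - 2 * u s) * p s + 2 * (q s) ^ 2 * p s / s)
    (hp' : ∀ s > (0:ℝ), deriv p s =
      s * p s - (γ₀ + 2 * w s) * q s - 2 * q s * (p s) ^ 2 / s)
    (hu' : ∀ s > (0:ℝ), deriv u s = -2 * (q s) ^ 2)
    (hw' : ∀ s > (0:ℝ), deriv w s = -2 * (p s) ^ 2)
    (hint : ∀ s > (0:ℝ),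
      β₀ * γ₀ - 4 * p s * q s = (β₀ - 2 * u s) * (γ₀ + 2 * w s)) :
    ∀ s > (0:ℝ),
      (s + 2 * q s * p s / s) ^ 2 =
        s ^ 2 - 2 * deriv (fun t => (q t) ^ 2 * (γ₀ + 2 * w t) + (p t) ^ 2 * (β₀ - 2 * u t)
          - 2 * t * q t * p t + 2 * (q t) ^ 2 * (p t) ^ 2 / t) s ∧
      (s * deriv (deriv (fun t => (q t) ^ 2 * (γ₀ + 2 * w t) + (p t) ^ 2 * (β₀ - 2 * u t)
            - 2 * t * q t * p t + 2 * (q t) ^ 2 * (p t) ^ 2 / t)) s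
          + 2 * deriv (fun t => (q t) ^ 2 * (γ₀ + 2 * w t) + (p t) ^ 2 * (β₀ - 2 * u t)
            - 2 * t * q t * p t + 2 * (q t) ^ 2 * (p t) ^ 2 / t) s
          - 2 * s * (s - (s + 2 * q s * p s / s))) ^ 2 =
        4 * (s + 2 * q s * p s / s) ^ 2 *
          ((((q s) ^ 2 * (γ₀ + 2 * w s) + (p s) ^ 2 * (β₀ - 2 * u s)
              - 2 * s * q s * p s + 2 * (q s) ^ 2 * (p s) ^ 2 / s)
            + s * deriv (fun t => (q t) ^ 2 * (γ₀ + 2 * w t) + (p t) ^ 2 * (β₀ - 2 * u t)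
              - 2 * t * q t * p t + 2 * (q t) ^ 2 * (p t) ^ 2 / t) s) ^ 2
            - 4 * s ^ 2 * (s - (s + 2 * q s * p s / s)) *
              ((q s) ^ 2 * (γ₀ + 2 * w s) + (p s) ^ 2 * (β₀ - 2 * u s)
                - 2 * s * q s * p s + 2 * (q s) ^ 2 * (p s) ^ 2 / s)
            - 2 * N * s ^ 2 * (s - (s + 2 * q s * p s / s)) ^ 2) := by
  have h2N : β₀ * γ₀ = 2 * N := by
    rw [hβ₀, hγ₀]; exact Real.mul_self_sqrt (by positivity)
  -- the first derivative of R on (0, ∞)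
  have hF' : ∀ x > (0:ℝ),
      deriv (fun t => (q t) ^ 2 * (γ₀ + 2 * w t) + (p t) ^ 2 * (β₀ - 2 * u t)
        - 2 * t * q t * p t + 2 * (q t) ^ 2 * (p t) ^ 2 / t) x
      = -2 * q x * p x - 2 * (q x) ^ 2 * (p x) ^ 2 / x ^ 2 := by
    intro x hx
    have hxne : x ≠ 0 := ne_of_gt hx
    have Hq := (hq x hx).hasDerivAt
    have Hp := (hp x hx).hasDerivAt
    have Hu := (hu x hx).hasDerivAt
    have Hw := (hw x hx).hasDerivAt
    have H1 := (Hq.pow 2).mul ((Hw.const_mul 2).const_add γ₀)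
    have H2 := (Hp.pow 2).mul ((Hu.const_mul 2).const_sub β₀)
    have H3 := (((hasDerivAt_id x).const_mul 2).mul Hq).mul Hp
    have H4 := (((Hq.pow 2).const_mul 2).mul (Hp.pow 2)).div (hasDerivAt_id x) hxne
    have H := ((H1.add H2).sub H3).add H4
    exact H.deriv.trans (by
      rw [hq' x hx, hp' x hx, hu' x hx, hw' x hx]
      norm_num
      field_simp
      ring)
  intro s hs
  have hsne : s ≠ 0 := ne_of_gt hs
  -- the second derivative of R at s
  have hF'' : deriv (deriv (fun t => (q t) ^ 2 * (γ₀ + 2 * w t) + (p t) ^ 2 * (β₀ - 2 * u t)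
        - 2 * t * q t * p t + 2 * (q t) ^ 2 * (p t) ^ 2 / t)) s
      = -2 * ((β₀ - 2 * u s) * (p s) ^ 2 - (γ₀ + 2 * w s) * (q s) ^ 2)
        - 4 * (q s * p s) * ((β₀ - 2 * u s) * (p s) ^ 2 - (γ₀ + 2 * w s) * (q s) ^ 2) / s ^ 2
        + 4 * (q s * p s) ^ 2 / s ^ 3 := by
    have e1 : deriv (deriv (fun t => (q t) ^ 2 * (γ₀ + 2 * w t) + (p t) ^ 2 * (β₀ - 2 * u t)
          - 2 * t * q t * p t + 2 * (q t) ^ 2 * (p t) ^ 2 / t)) s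
        = deriv (fun t => -2 * q t * p t - 2 * (q t) ^ 2 * (p t) ^ 2 / t ^ 2) s := by
      apply Filter.EventuallyEq.deriv_eq
      filter_upwards [Ioi_mem_nhds hs] with y hy
      exact hF' y hy
    rw [e1]
    have Hq := (hq s hs).hasDerivAt
    have Hp := (hp s hs).hasDerivAt
    have G1 := (Hq.const_mul (-2)).mul Hp
    have G2 := (((Hq.pow 2).const_mul 2).mul (Hp.pow 2)).div
      ((hasDerivAt_id s).pow 2) (pow_ne_zero 2 hsne)
    have H := G1.sub G2
    exact H.deriv.trans (by
      rw [hq' s hs, hp' s hs]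
      norm_num
      field_simp
      ring)
  have hBG2 : (β₀ - 2 * u s) * (γ₀ + 2 * w s) = 2 * (N:ℝ) - 4 * p s * q s := by
    rw [← hint s hs, h2N]
  constructor
  · rw [hF' s hs]
    field_simp
    ring
  · rw [hF' s hs, hF'']
    linear_combination
      gue_alg s (q s) (p s) (β₀ - 2 * u s) (γ₀ + 2 * w s) (2 * (N:ℝ)) hsne hBG2
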